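/- arXiv:1703.00819 — 8 statements merged into one kernel-verified Lean document; each statement's English description precedes it below -/
import Mathlib

section
/- Let s₁ < s₂ < s₃ be rational numbers with width w := 1/(s₂-s₁) + 1/(s₃-s₂) < 1. Define l_k := ⌊k·s₂⌋ - ⌈k·s₁⌉ + 1 and r_k := ⌊k·s₃⌋ - ⌈k·s₂⌉ + 1 for positive integers k, and let π(n) be the number of positive integers k with l_k ≤ n plus the number of positive integers k with r_k ≤ n. Then for every integer n ≥ 0, one has wn - 2 ≤ π(n) < w(n+1). In particular π(n) ≤ n for all n ≥ 0. -/
lemma aux_count (s t : ℚ) (hst : s < t) (f : ℕ → ℤ)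
    (hf : ∀ k : ℕ, f k = ⌊(k : ℚ) * t⌋ - ⌈(k : ℚ) * s⌉ + 1) (n : ℕ) :
    (n : ℚ) / (t - s) - 1 ≤ (Nat.card {k : ℕ // 1 ≤ k ∧ f k ≤ (n : ℤ)} : ℚ) ∧
    (Nat.card {k : ℕ // 1 ≤ k ∧ f k ≤ (n : ℤ)} : ℚ) < ((n : ℚ) + 1) / (t - s) := by
  have hd : (0:ℚ) < t - s := by linarith
  set d := t - s with hdef
  set A : Set ℕ := {k : ℕ | 1 ≤ k ∧ f k ≤ (n : ℤ)} with hA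
  have claimA : ∀ k : ℕ, (k : ℚ) * d < n → f k ≤ (n : ℤ) := by
    intro k hk
    rw [hf]
    have h1 := Int.floor_le ((k:ℚ) * t)
    have h2 := Int.le_ceil ((k:ℚ) * s)
    have ht : (k:ℚ)*t = (k:ℚ)*s + (k:ℚ)*d := by rw [hdef]; ring
    have h3 : ((⌊(k:ℚ)*t⌋ : ℚ)) < (⌈(k:ℚ)*s⌉ : ℚ) + n := by linarith
    have h4 : ⌊(k:ℚ)*t⌋ < ⌈(k:ℚ)*s⌉ + (n:ℤ) := by exact_mod_cast h3
    omega
  have claimB : ∀ k : ℕ, f k ≤ (n : ℤ) → (k : ℚ) * d < (n : ℚ) + 1 := by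
    intro k hk
    rw [hf] at hk
    have h1 := Int.sub_one_lt_floor ((k:ℚ)*t)
    have h2 := Int.ceil_lt_add_one ((k:ℚ)*s)
    have hk' : ((⌊(k:ℚ)*t⌋:ℚ)) - (⌈(k:ℚ)*s⌉:ℚ) + 1 ≤ n := by exact_mod_cast hk
    have ht : (k:ℚ)*t = (k:ℚ)*s + (k:ℚ)*d := by rw [hdef]; ring
    linarith
  set a : ℕ := (⌈(n : ℚ) / d⌉ - 1).toNat with ha
  set b : ℕ := (⌈((n : ℚ) + 1) / d⌉ - 1).toNat with hb
  have hsub1 : A ⊆ ↑(Finset.Icc 1 b) := by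
    intro k hk
    obtain ⟨hk1, hk2⟩ := hk
    have h1 : (k : ℚ) * d < (n : ℚ) + 1 := claimB k hk2
    have h2 : (k : ℚ) < ((n:ℚ)+1) / d := by
      rw [lt_div_iff₀ hd]; exact h1
    have h3 : (k : ℤ) < ⌈((n:ℚ)+1)/d⌉ := by
      rw [Int.lt_ceil]; exact_mod_cast h2
    simp only [Finset.coe_Icc, Set.mem_Icc]
    constructor
    · exact hk1
    · omega
  have hsub2 : ↑(Finset.Icc 1 a) ⊆ A := by
    intro k hk
    simp only [Finset.coe_Icc, Set.mem_Icc] at hk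
    obtain ⟨hk1, hk2⟩ := hk
    have h1 : (k : ℤ) < ⌈(n:ℚ)/d⌉ := by omega
    have h2 : (k : ℚ) < (n:ℚ)/d := by
      have := Int.lt_ceil.mp h1
      exact_mod_cast this
    have h3 : (k : ℚ) * d < n := by
      rw [← lt_div_iff₀ hd]; exact h2
    exact ⟨hk1, claimA k h3⟩
  have hfin : A.Finite := Set.Finite.subset (Finset.Icc 1 b).finite_toSet hsub1
  have hcard : Nat.card {k : ℕ // 1 ≤ k ∧ f k ≤ (n:ℤ)} = A.ncard :=
    Nat.card_coe_set_eq A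
  have h1 : a ≤ A.ncard := by
    have := Set.ncard_le_ncard hsub2 hfin
    rw [Set.ncard_coe_finset, Nat.card_Icc] at this
    omega
  have h2 : A.ncard ≤ b := by
    have := Set.ncard_le_ncard hsub1 (Finset.Icc 1 b).finite_toSet
    rw [Set.ncard_coe_finset, Nat.card_Icc] at this
    omega
  rw [hcard]
  constructor
  · -- lower bound
    have ha1 : (n : ℚ) / d - 1 ≤ (a : ℚ) := by
      have hle := Int.le_ceil ((n:ℚ)/d)
      have hto : (⌈(n:ℚ)/d⌉ - 1 : ℤ) ≤ ((⌈(n:ℚ)/d⌉ - 1).toNat : ℤ) := Int.self_le_toNat _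
      have : ((⌈(n:ℚ)/d⌉ - 1 : ℤ) : ℚ) ≤ (a : ℚ) := by
        rw [ha]; exact_mod_cast hto
      push_cast at this
      linarith
    have : (a : ℚ) ≤ (A.ncard : ℚ) := by exact_mod_cast h1
    linarith
  · -- upper bound
    have hb1 : (b : ℚ) < ((n:ℚ)+1) / d := by
      have hpos : (0:ℚ) < ((n:ℚ)+1)/d := by positivity
      rcases le_or_gt (⌈((n:ℚ)+1)/d⌉ - 1) 0 with hc | hc
      · have : b = 0 := by omega
        rw [this]; simpa using hpos
      · have hbe : (b : ℤ) = ⌈((n:ℚ)+1)/d⌉ - 1 := by omega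
        have hlt := Int.ceil_lt_add_one (((n:ℚ)+1)/d)
        have : ((b : ℤ) : ℚ) = ((⌈((n:ℚ)+1)/d⌉ : ℤ) : ℚ) - 1 := by exact_mod_cast hbe
        push_cast at this ⊢
        rw [this]
        push_cast at hlt
        linarith
    have : (A.ncard : ℚ) ≤ (b : ℚ) := by exact_mod_cast h2
    linarith

theorem stmt3 (s₁ s₂ s₃ : ℚ) (h12 : s₁ < s₂) (h23 : s₂ < s₃)
    (hw : 1 / (s₂ - s₁) + 1 / (s₃ - s₂) < 1)
    (l r : ℕ → ℤ)
    (hl : ∀ k : ℕ, l k = ⌊(k : ℚ) * s₂⌋ - ⌈(k : ℚ) * s₁⌉ + 1)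
    (hr : ∀ k : ℕ, r k = ⌊(k : ℚ) * s₃⌋ - ⌈(k : ℚ) * s₂⌉ + 1)
    (π : ℕ → ℕ)
    (hπ : ∀ n : ℕ, π n = Nat.card {k : ℕ // 1 ≤ k ∧ l k ≤ (n : ℤ)} +
        Nat.card {k : ℕ // 1 ≤ k ∧ r k ≤ (n : ℤ)}) :
    ∀ n : ℕ,
      ((1 / (s₂ - s₁) + 1 / (s₃ - s₂)) * n - 2 ≤ (π n : ℚ) ∧
        (π n : ℚ) < (1 / (s₂ - s₁) + 1 / (s₃ - s₂)) * (n + 1)) ∧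
      π n ≤ n := by
  intro n
  have hd : (0:ℚ) < s₂ - s₁ := by linarith
  have he : (0:ℚ) < s₃ - s₂ := by linarith
  obtain ⟨hl1, hl2⟩ := aux_count s₁ s₂ h12 l hl n
  obtain ⟨hr1, hr2⟩ := aux_count s₂ s₃ h23 r hr n
  have hπn : (π n : ℚ) = (Nat.card {k : ℕ // 1 ≤ k ∧ l k ≤ (n : ℤ)} : ℚ) +
      (Nat.card {k : ℕ // 1 ≤ k ∧ r k ≤ (n : ℤ)} : ℚ) := by
    rw [hπ n]; push_cast; ring
  have hsplit1 : (1 / (s₂ - s₁) + 1 / (s₃ - s₂)) * (n:ℚ) =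
      (n:ℚ)/(s₂ - s₁) + (n:ℚ)/(s₃ - s₂) := by ring
  have hsplit2 : (1 / (s₂ - s₁) + 1 / (s₃ - s₂)) * ((n:ℚ) + 1) =
      ((n:ℚ)+1)/(s₂ - s₁) + ((n:ℚ)+1)/(s₃ - s₂) := by ring
  have hmain1 : (1 / (s₂ - s₁) + 1 / (s₃ - s₂)) * (n:ℚ) - 2 ≤ (π n : ℚ) := by
    rw [hsplit1, hπn]; linarith
  have hmain2 : (π n : ℚ) < (1 / (s₂ - s₁) + 1 / (s₃ - s₂)) * ((n:ℚ) + 1) := by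
    rw [hsplit2, hπn]; linarith
  refine ⟨⟨hmain1, hmain2⟩, ?_⟩
  have hlt : (π n : ℚ) < (n:ℚ) + 1 := by
    have hpos : (0:ℚ) < (n:ℚ) + 1 := by positivity
    have := mul_lt_mul_of_pos_right hw hpos
    rw [one_mul] at this
    linarith
  have : π n < n + 1 := by exact_mod_cast hlt
  omega
end

section
/- Let s₁ < s₂ < s₃ be rational numbers with width w := 1/(s₂-s₁) + 1/(s₃-s₂) < 1. Define the reduced degree d as the largest nonnegative integer such that exactly d of the values l_k, r_k (counted with multiplicity over all k ≥ 1) are at most d, where l_k := ⌊k·s₂⌋ - ⌈k·s₁⌉ + 1 and r_k := ⌊k·s₃⌋ - ⌈k·s₂⌉ + 1. Then d < w/(1-w). -/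
lemma count_lt (s t : ℚ) (hst : s < t) (f : ℕ → ℤ)
    (hf : ∀ k : ℕ, f k = ⌊(k : ℚ) * t⌋ - ⌈(k : ℚ) * s⌉ + 1) (n : ℕ) :
    (Nat.card {k : ℕ // 1 ≤ k ∧ f k ≤ (n : ℤ)} : ℚ) < ((n : ℚ) + 1) / (t - s) := by
  have ha : (0:ℚ) < t - s := by linarith
  -- key bound
  have key : ∀ k : ℕ, 1 ≤ k → f k ≤ (n : ℤ) → (k : ℚ) < ((n:ℚ)+1)/(t-s) := by
    intro k hk hfk
    have h1 : (k:ℚ)*t - 1 < ⌊(k : ℚ) * t⌋ := Int.sub_one_lt_floor _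
    have h2 : (⌈(k : ℚ) * s⌉ : ℚ) < (k:ℚ)*s + 1 := Int.ceil_lt_add_one _
    have h3 : (k:ℚ)*(t-s) - 1 < (f k : ℚ) := by
      rw [hf k]; push_cast; ring_nf; push_cast at h1 h2 ⊢; linarith
    have h4 : (f k : ℚ) ≤ (n:ℚ) := by exact_mod_cast hfk
    rw [lt_div_iff₀ ha]; linarith
  set M : ℕ := (⌈((n:ℚ)+1)/(t-s)⌉ - 1).toNat with hM
  have hceil : 1 ≤ ⌈((n:ℚ)+1)/(t-s)⌉ := by
    apply Int.one_le_ceil_iff.mpr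
    positivity
  have hMq : (M : ℚ) < ((n:ℚ)+1)/(t-s) := by
    have : (M : ℤ) = ⌈((n:ℚ)+1)/(t-s)⌉ - 1 := Int.toNat_of_nonneg (by omega)
    have h5 : (⌈((n:ℚ)+1)/(t-s)⌉ : ℚ) < ((n:ℚ)+1)/(t-s) + 1 := Int.ceil_lt_add_one _
    have : (M:ℚ) = (⌈((n:ℚ)+1)/(t-s)⌉ : ℚ) - 1 := by exact_mod_cast this
    linarith
  have hsub : {k : ℕ | 1 ≤ k ∧ f k ≤ (n : ℤ)} ⊆ Set.Icc 1 M := by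
    intro k hk
    obtain ⟨hk1, hk2⟩ := hk
    refine ⟨hk1, ?_⟩
    have := key k hk1 hk2
    have hkM : (k:ℚ) < (M:ℚ) + 1 := by
      have : (M : ℤ) = ⌈((n:ℚ)+1)/(t-s)⌉ - 1 := Int.toNat_of_nonneg (by omega)
      have h6 : ((n:ℚ)+1)/(t-s) ≤ (⌈((n:ℚ)+1)/(t-s)⌉:ℚ) := Int.le_ceil _
      have h7 : (M:ℚ) = (⌈((n:ℚ)+1)/(t-s)⌉ : ℚ) - 1 := by exact_mod_cast this
      linarith
    exact_mod_cast Nat.lt_add_one_iff.mp (by exact_mod_cast hkM)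
  have hcard : Nat.card {k : ℕ // 1 ≤ k ∧ f k ≤ (n : ℤ)} ≤ M := by
    have h8 := Nat.card_mono (Set.finite_Icc 1 M) hsub
    have h9 : Nat.card (Set.Icc 1 M) = M := by
      rw [Nat.card_coe_set_eq, ← Finset.coe_Icc, Set.ncard_coe_finset, Nat.card_Icc]
      omega
    rw [h9] at h8
    exact h8
  calc (Nat.card {k : ℕ // 1 ≤ k ∧ f k ≤ (n : ℤ)} : ℚ) ≤ M := by exact_mod_cast hcard
    _ < _ := hMq

theorem stmt4 (s₁ s₂ s₃ : ℚ) (h12 : s₁ < s₂) (h23 : s₂ < s₃)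
    (hw : 1 / (s₂ - s₁) + 1 / (s₃ - s₂) < 1)
    (l r : ℕ → ℤ)
    (hl : ∀ k : ℕ, l k = ⌊(k : ℚ) * s₂⌋ - ⌈(k : ℚ) * s₁⌉ + 1)
    (hr : ∀ k : ℕ, r k = ⌊(k : ℚ) * s₃⌋ - ⌈(k : ℚ) * s₂⌉ + 1)
    (π : ℕ → ℕ)
    (hπ : ∀ n : ℕ, π n = Nat.card {k : ℕ // 1 ≤ k ∧ l k ≤ (n : ℤ)} +
        Nat.card {k : ℕ // 1 ≤ k ∧ r k ≤ (n : ℤ)})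
    (d : ℕ) (hd : π d = d) (hdmax : ∀ m : ℕ, π m = m → m ≤ d) :
    (d : ℚ) < (1 / (s₂ - s₁) + 1 / (s₃ - s₂)) /
      (1 - (1 / (s₂ - s₁) + 1 / (s₃ - s₂))) := by
  have ha : (0:ℚ) < s₂ - s₁ := by linarith
  have hb : (0:ℚ) < s₃ - s₂ := by linarith
  set w : ℚ := 1 / (s₂ - s₁) + 1 / (s₃ - s₂) with hwdef
  have hw0 : 0 < w := by positivity
  have hA := count_lt s₁ s₂ h12 l hl d
  have hB := count_lt s₂ s₃ h23 r hr d
  have hπd : (d : ℚ) < ((d:ℚ)+1) * w := by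
    have : (Nat.card {k : ℕ // 1 ≤ k ∧ l k ≤ (d : ℤ)} : ℚ) +
        (Nat.card {k : ℕ // 1 ≤ k ∧ r k ≤ (d : ℤ)} : ℚ) = (d:ℚ) := by
      have := (hπ d).symm
      rw [hd] at this
      exact_mod_cast this
    have e1 : ((d:ℚ)+1) * w = ((d:ℚ)+1)/(s₂-s₁) + ((d:ℚ)+1)/(s₃-s₂) := by
      rw [hwdef]; field_simp
    rw [e1]
    linarith
  rw [lt_div_iff₀ (by linarith : (0:ℚ) < 1 - w)]
  nlinarith
end

section
/- Let s₁ < s₂ < s₃ be rational numbers with width w := 1/(s₂-s₁) + 1/(s₃-s₂) < 1. Define l_k := ⌊k·s₂⌋ - ⌈k·s₁⌉ + 1 and r_k := ⌊k·s₃⌋ - ⌈k·s₂⌉ + 1. If l₁ ≠ 1 then the sequence (l_k)_{k≥1} is strictly increasing, and if r₁ ≠ 1 then the sequence (r_k)_{k≥1} is strictly increasing. -/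
lemma aux_mono (a b : ℚ) (hab : a + 1 < b)
    (f : ℕ → ℤ) (hf : ∀ k : ℕ, f k = ⌊(k : ℚ) * b⌋ - ⌈(k : ℚ) * a⌉ + 1)
    (h1 : f 1 ≠ 1) : ∀ k : ℕ, 1 ≤ k → f k < f (k + 1) := by
  have hceil : (⌈a⌉ : ℤ) ≤ ⌊b⌋ := by
    calc ⌈a⌉ ≤ ⌊a⌋ + 1 := Int.ceil_le_floor_add_one a
    _ = ⌊a + 1⌋ := by rw [Int.floor_add_one]
    _ ≤ ⌊b⌋ := Int.floor_le_floor hab.le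
  have hf1 : f 1 = ⌊b⌋ - ⌈a⌉ + 1 := by rw [hf 1]; norm_num
  have h2 : 2 ≤ f 1 := by omega
  intro k hk
  have hfl : ⌊(k : ℚ) * b⌋ + ⌊b⌋ ≤ ⌊((k : ℚ) + 1) * b⌋ := by
    rw [Int.le_floor]
    push_cast
    have := Int.floor_le ((k : ℚ) * b)
    have := Int.floor_le b
    nlinarith
  have hcl : ⌈((k : ℚ) + 1) * a⌉ ≤ ⌈(k : ℚ) * a⌉ + ⌈a⌉ := by
    rw [Int.ceil_le]
    push_cast
    have := Int.le_ceil ((k : ℚ) * a)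
    have := Int.le_ceil a
    nlinarith
  have e1 := hf k
  have e2 := hf (k + 1)
  push_cast at e2
  omega

theorem stmt5 (s₁ s₂ s₃ : ℚ) (h12 : s₁ < s₂) (h23 : s₂ < s₃)
    (hw : 1 / (s₂ - s₁) + 1 / (s₃ - s₂) < 1)
    (l r : ℕ → ℤ)
    (hl : ∀ k : ℕ, l k = ⌊(k : ℚ) * s₂⌋ - ⌈(k : ℚ) * s₁⌉ + 1)
    (hr : ∀ k : ℕ, r k = ⌊(k : ℚ) * s₃⌋ - ⌈(k : ℚ) * s₂⌉ + 1) :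
    (l 1 ≠ 1 → ∀ k : ℕ, 1 ≤ k → l k < l (k + 1)) ∧
    (r 1 ≠ 1 → ∀ k : ℕ, 1 ≤ k → r k < r (k + 1)) := by
  have hd1 : (0:ℚ) < s₂ - s₁ := by linarith
  have hd2 : (0:ℚ) < s₃ - s₂ := by linarith
  have hp1 : (0:ℚ) < 1 / (s₂ - s₁) := by positivity
  have hp2 : (0:ℚ) < 1 / (s₃ - s₂) := by positivity
  have hg1 : s₁ + 1 < s₂ := by
    have : 1 / (s₂ - s₁) < 1 := by linarith
    rw [div_lt_one hd1] at this
    linarith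
  have hg2 : s₂ + 1 < s₃ := by
    have : 1 / (s₃ - s₂) < 1 := by linarith
    rw [div_lt_one hd2] at this
    linarith
  exact ⟨aux_mono s₁ s₂ hg1 l hl, aux_mono s₂ s₃ hg2 r hr⟩
end

section
/- Let n, m be positive integers and x a real number such that x-n, x-n+1, …, x+m are all nonzero as needed. Then Σ_{i=0}^{n} (-1)^i · C(n,i) · (x-i)_{-m} = (-1)^n · (x-n)_{-n-m} · (n+m-1)_n, where (y)_{-k} := 1/((y+1)(y+2)⋯(y+k)) and (a)_k is the falling factorial. -/
/-- The falling factorial `(x)_m = x (x-1) ⋯ (x-m+1)`, with `(x)_0 = 1`. -/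
def fall (x : ℝ) (m : ℕ) : ℝ := ∏ i ∈ Finset.range m, (x - i)

/-- The generalized falling factorial: for `n ≥ 0`, `(x)_n = x (x-1) ⋯ (x-n+1)`;
for `n < 0`, `(x)_n = 1 / ((x+1)(x+2) ⋯ (x+(-n)))`. -/
noncomputable def gfall (x : ℝ) (n : ℤ) : ℝ :=
  if 0 ≤ n then ∏ i ∈ Finset.range n.toNat, (x - i)
  else (∏ i ∈ Finset.range (-n).toNat, (x + 1 + i))⁻¹

lemma prod_shift (y : ℝ) (M : ℕ) :
    (∏ i ∈ Finset.range M, (y + 2 + (i:ℝ))) * (y + 1) =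
      ∏ i ∈ Finset.range (M+1), (y + 1 + (i:ℝ)) := by
  rw [Finset.prod_range_succ' (fun i => (y + 1 + (i:ℝ)))]
  congr 1
  · apply Finset.prod_congr rfl; intro i _; push_cast; ring
  · norm_num

lemma prod_last (y : ℝ) (M : ℕ) :
    (∏ i ∈ Finset.range M, (y + 1 + (i:ℝ))) * (y + 1 + M) =
      ∏ i ∈ Finset.range (M+1), (y + 1 + (i:ℝ)) := by
  rw [Finset.prod_range_succ]

lemma diff_lemma (y : ℝ) (M : ℕ) (h : ∀ i ∈ Finset.range (M+1), y + 1 + (i:ℝ) ≠ 0) :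
    (∏ i ∈ Finset.range M, (y + 2 + (i:ℝ)))⁻¹ - (∏ i ∈ Finset.range M, (y + 1 + (i:ℝ)))⁻¹
      = -(M:ℝ) * (∏ i ∈ Finset.range (M+1), (y + 1 + (i:ℝ)))⁻¹ := by
  have hQ : (∏ i ∈ Finset.range (M+1), (y + 1 + (i:ℝ))) ≠ 0 := Finset.prod_ne_zero_iff.mpr h
  have h1 : y + 1 ≠ 0 := by simpa using h 0 (by simp)
  have hM : y + 1 + (M:ℝ) ≠ 0 := h M (by simp)
  have hA' : (∏ i ∈ Finset.range M, (y + 2 + (i:ℝ)))⁻¹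
      = (y + 1) * (∏ i ∈ Finset.range (M+1), (y + 1 + (i:ℝ)))⁻¹ := by
    have hAne : (∏ i ∈ Finset.range M, (y + 2 + (i:ℝ))) ≠ 0 := by
      intro h0; apply hQ; rw [← prod_shift, h0, zero_mul]
    field_simp
    linear_combination -prod_shift y M
  have hB' : (∏ i ∈ Finset.range M, (y + 1 + (i:ℝ)))⁻¹
      = (y + 1 + M) * (∏ i ∈ Finset.range (M+1), (y + 1 + (i:ℝ)))⁻¹ := by
    have hBne : (∏ i ∈ Finset.range M, (y + 1 + (i:ℝ))) ≠ 0 := by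
      intro h0; apply hQ; rw [← prod_last, h0, zero_mul]
    field_simp
    linear_combination -prod_last y M
  rw [hA', hB']; ring

lemma key (m : ℕ) : ∀ (n : ℕ) (x : ℝ), (∀ t : ℤ, 1 - (n:ℤ) ≤ t → t ≤ (m:ℤ) → x + t ≠ 0) →
    ∑ i ∈ Finset.range (n+1), (-1:ℝ)^i * (n.choose i) *
        (∏ j ∈ Finset.range m, (x - (i:ℝ) + 1 + (j:ℝ)))⁻¹
      = (-1:ℝ)^n * (∏ j ∈ Finset.range (n+m), (x - (n:ℝ) + 1 + (j:ℝ)))⁻¹ *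
        ∏ j ∈ Finset.range n, ((n:ℝ) + m - 1 - (j:ℝ)) := by
  intro n
  induction n with
  | zero => intro x hx; simp
  | succ n ih =>
    intro x hx
    have hxn : ∀ t : ℤ, 1 - (n:ℤ) ≤ t → t ≤ (m:ℤ) → x + t ≠ 0 := by
      intro t h1 h2; exact hx t (by omega) h2
    have hxn' : ∀ t : ℤ, 1 - (n:ℤ) ≤ t → t ≤ (m:ℤ) → (x - 1) + t ≠ 0 := by
      intro t h1 h2
      have := hx (t-1) (by omega) (by omega)
      push_cast at this ⊢; intro h0; apply this; linarith
    have Sx := ih x hxn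
    have Sx1 := ih (x-1) hxn'
    have decomp : ∑ i ∈ Finset.range (n+2), (-1:ℝ)^i * ((n+1).choose i) *
        (∏ j ∈ Finset.range m, (x - (i:ℝ) + 1 + (j:ℝ)))⁻¹
      = (∑ i ∈ Finset.range (n+1), (-1:ℝ)^i * (n.choose i) *
          (∏ j ∈ Finset.range m, (x - (i:ℝ) + 1 + (j:ℝ)))⁻¹)
        - (∑ i ∈ Finset.range (n+1), (-1:ℝ)^i * (n.choose i) *
          (∏ j ∈ Finset.range m, ((x-1) - (i:ℝ) + 1 + (j:ℝ)))⁻¹) := by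
      rw [Finset.sum_range_succ' (fun i => (-1:ℝ)^i * ((n+1).choose i) *
        (∏ j ∈ Finset.range m, (x - (i:ℝ) + 1 + (j:ℝ)))⁻¹)]
      have split : ∀ i ∈ Finset.range (n+1),
          (-1:ℝ)^(i+1) * ((n+1).choose (i+1)) *
            (∏ j ∈ Finset.range m, (x - ((i+1:ℕ):ℝ) + 1 + (j:ℝ)))⁻¹
          = (-1:ℝ)^(i+1) * (n.choose (i+1)) *
              (∏ j ∈ Finset.range m, (x - ((i+1:ℕ):ℝ) + 1 + (j:ℝ)))⁻¹
            - (-1:ℝ)^i * (n.choose i) *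
              (∏ j ∈ Finset.range m, ((x-1) - (i:ℝ) + 1 + (j:ℝ)))⁻¹ := by
        intro i _
        rw [Nat.choose_succ_succ]
        have e0 : (∏ j ∈ Finset.range m, (x - ((i+1:ℕ):ℝ) + 1 + (j:ℝ)))
            = ∏ j ∈ Finset.range m, ((x-1) - (i:ℝ) + 1 + (j:ℝ)) := by
          apply Finset.prod_congr rfl; intro j _; push_cast; ring
        rw [e0]
        push_cast
        ring
      rw [Finset.sum_congr rfl split, Finset.sum_sub_distrib]
      have e3 : ∑ i ∈ Finset.range (n+1), (-1:ℝ)^(i+1) * (n.choose (i+1)) *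
            (∏ j ∈ Finset.range m, (x - ((i+1:ℕ):ℝ) + 1 + (j:ℝ)))⁻¹
          = (∑ i ∈ Finset.range (n+2), (-1:ℝ)^i * (n.choose i) *
            (∏ j ∈ Finset.range m, (x - (i:ℝ) + 1 + (j:ℝ)))⁻¹)
            - (-1:ℝ)^0 * (n.choose 0) * (∏ j ∈ Finset.range m, (x - ((0:ℕ):ℝ) + 1 + (j:ℝ)))⁻¹ := by
        rw [Finset.sum_range_succ' (fun i => (-1:ℝ)^i * (n.choose i) *
          (∏ j ∈ Finset.range m, (x - (i:ℝ) + 1 + (j:ℝ)))⁻¹)]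
        ring
      rw [e3, Finset.sum_range_succ]
      simp [Nat.choose_succ_self]
      push_cast
      ring
    rw [show n+1+1 = n+2 from rfl, decomp, Sx, Sx1]
    have eA : (∏ j ∈ Finset.range (n+m), (x - (n:ℝ) + 1 + (j:ℝ)))
        = ∏ j ∈ Finset.range (n+m), ((x - (n:ℝ) - 1) + 2 + (j:ℝ)) :=
      Finset.prod_congr rfl fun j _ => by ring
    have eB : (∏ j ∈ Finset.range (n+m), ((x-1) - (n:ℝ) + 1 + (j:ℝ)))
        = ∏ j ∈ Finset.range (n+m), ((x - (n:ℝ) - 1) + 1 + (j:ℝ)) :=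
      Finset.prod_congr rfl fun j _ => by ring
    have eC : (∏ j ∈ Finset.range (n+1+m), (x - (((n+1:ℕ)):ℝ) + 1 + (j:ℝ)))
        = ∏ j ∈ Finset.range (n+m+1), ((x - (n:ℝ) - 1) + 1 + (j:ℝ)) := by
      rw [show n+1+m = n+m+1 by ring]
      apply Finset.prod_congr rfl; intro j _; push_cast; ring
    rw [eA, eB, eC]
    have hdiff := diff_lemma (x - (n:ℝ) - 1) (n+m) (by
      intro i hi
      have hi' : (i:ℤ) ≤ (n:ℤ) + m := by
        simp only [Finset.mem_range] at hi; omega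
      have := hx ((i:ℤ) - n) (by push_cast; omega) (by omega)
      push_cast at this ⊢
      intro h0; apply this; linarith)
    have hfall : (∏ j ∈ Finset.range (n+1), ((((n+1:ℕ)):ℝ) + m - 1 - (j:ℝ)))
        = ((n:ℝ) + m) * ∏ j ∈ Finset.range n, ((n:ℝ) + m - 1 - (j:ℝ)) := by
      rw [Finset.prod_range_succ' (fun j => ((((n+1:ℕ)):ℝ) + m - 1 - (j:ℝ)))]
      have e4 : ∀ j ∈ Finset.range n, ((((n+1:ℕ)):ℝ) + m - 1 - (((j+1:ℕ)):ℝ))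
          = (n:ℝ) + m - 1 - (j:ℝ) := by intro j _; push_cast; ring
      rw [Finset.prod_congr rfl e4]
      push_cast; ring
    rw [hfall]
    push_cast
    push_cast at hdiff
    linear_combination ((-1:ℝ)^n * ∏ j ∈ Finset.range n, ((n:ℝ) + m - 1 - (j:ℝ))) * hdiff

theorem stmt11 (n m : ℕ) (hn : 0 < n) (hm : 0 < m) (x : ℝ)
    (hx : ∀ t : ℤ, 1 - (n : ℤ) ≤ t → t ≤ (m : ℤ) → x + t ≠ 0) :
    ∑ i ∈ Finset.range (n + 1), (-1 : ℝ) ^ i * (n.choose i) * gfall (x - i) (-(m : ℤ)) =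
      (-1 : ℝ) ^ n * gfall (x - n) (-((n : ℤ) + m)) * fall ((n : ℝ) + m - 1) n := by
  have h1 : ∀ i : ℕ, gfall (x - i) (-(m : ℤ)) =
      (∏ j ∈ Finset.range m, (x - (i:ℝ) + 1 + (j:ℝ)))⁻¹ := by
    intro i
    rw [gfall, if_neg (by omega)]
    congr 1
    simp
  have h2 : gfall (x - n) (-((n : ℤ) + m)) =
      (∏ j ∈ Finset.range (n+m), (x - (n:ℝ) + 1 + (j:ℝ)))⁻¹ := by
    rw [gfall, if_neg (by omega)]
    have ht : (-(-((n:ℤ) + m))).toNat = n + m := by omega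
    rw [ht]
  simp only [h1, h2, fall]
  exact key m n x hx
end

section
/- Let n, m be positive integers and x a real number (with all relevant denominators nonzero). Then Σ_{i=0}^{n} (-1)^i · C(n,i) · i · (x-i)_{-m} = (-1)^n · (x-n)_{-n-m} · (n+m-2)_{n-1} · n · (x+m), where (y)_{-k} := 1/((y+1)⋯(y+k)) and (a)_k is the falling factorial. -/
noncomputable def G (x : ℝ) (k : ℕ) : ℝ := (∏ i ∈ Finset.range k, (x + 1 + (i : ℝ)))⁻¹

lemma gfall_neg (x : ℝ) (k : ℕ) : gfall x (-(k : ℤ)) = G x k := by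
  cases k with
  | zero => simp [gfall, G]
  | succ k =>
    rw [gfall, if_neg (by omega), G]
    norm_num

lemma Gsucc (x : ℝ) (k : ℕ) : G x (k + 1) = G x k * (x + 1 + k)⁻¹ := by
  rw [G, Finset.prod_range_succ, mul_inv, G]

lemma Gsucc' (x : ℝ) (k : ℕ) : G (x - 1) (k + 1) = x⁻¹ * G x k := by
  rw [G, Finset.prod_range_succ', mul_inv, G]
  push_cast
  ring_nf

lemma Gdiff (y : ℝ) (k : ℕ) (h1 : y + 1 ≠ 0) (h2 : y + 1 + k ≠ 0) :
    G (y + 1) k - G y k = -(k : ℝ) * G y (k + 1) := by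
  have e1 : G (y + 1) k = (y + 1) * G y (k + 1) := by
    have := Gsucc' (y + 1) k
    rw [add_sub_cancel_right] at this
    rw [this, ← mul_assoc, mul_inv_cancel₀ h1, one_mul]
  have e2 : G y k = (y + 1 + k) * G y (k + 1) := by
    rw [Gsucc y k, mul_comm (y+1+k), mul_assoc, inv_mul_cancel₀ h2, mul_one]
  rw [e1, e2]; ring

lemma Ssucc (n : ℕ) (x : ℝ) (h : ℝ → ℝ) :
    ∑ i ∈ Finset.range (n + 2), (-1 : ℝ) ^ i * ((n + 1).choose i) * h (x - i)
      = (∑ i ∈ Finset.range (n + 1), (-1 : ℝ) ^ i * (n.choose i) * h (x - i))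
        - ∑ i ∈ Finset.range (n + 1), (-1 : ℝ) ^ i * (n.choose i) * h ((x - 1) - i) := by
  have hA : (∑ i ∈ Finset.range (n + 1), (-1 : ℝ) ^ i * (n.choose i) * h (x - i))
      = ∑ i ∈ Finset.range (n + 2), (-1 : ℝ) ^ i * (n.choose i) * h (x - i) := by
    rw [Finset.sum_range_succ _ (n + 1), Nat.choose_succ_self]
    simp
  rw [hA, Finset.sum_range_succ' _ (n + 1), Finset.sum_range_succ' _ (n + 1)]
  have key : ∀ i ∈ Finset.range (n + 1),
      (-1 : ℝ) ^ (i + 1) * ((n + 1).choose (i + 1)) * h (x - (↑(i + 1) : ℝ))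
        = (-1 : ℝ) ^ (i + 1) * (n.choose (i + 1)) * h (x - (↑(i + 1) : ℝ))
          - (-1 : ℝ) ^ i * (n.choose i) * h ((x - 1) - i) := by
    intro i _
    have hc : ((n + 1).choose (i + 1) : ℝ) = (n.choose i : ℝ) + (n.choose (i + 1) : ℝ) := by
      rw [Nat.choose_succ_succ]; push_cast; ring
    have hx : x - (↑(i + 1) : ℝ) = (x - 1) - i := by push_cast; ring
    rw [hc, hx]; ring
  rw [Finset.sum_congr rfl key, Finset.sum_sub_distrib]
  simp
  ring

lemma aux (m : ℕ) : ∀ n : ℕ, ∀ x : ℝ,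
    (∀ t : ℤ, 1 - (n : ℤ) ≤ t → t ≤ (m : ℤ) → x + t ≠ 0) →
    ∑ i ∈ Finset.range (n + 1), (-1 : ℝ) ^ i * (n.choose i) * G (x - i) m
      = (-1 : ℝ) ^ n * G (x - n) (n + m) * fall ((n : ℝ) + m - 1) n := by
  intro n
  induction n with
  | zero =>
    intro x _
    simp [fall]
  | succ n ih =>
    intro x hx
    have h1 : ∀ t : ℤ, 1 - (n : ℤ) ≤ t → t ≤ (m : ℤ) → x + t ≠ 0 := by
      intro t ht1 ht2; exact hx t (by omega) ht2
    have h2 : ∀ t : ℤ, 1 - (n : ℤ) ≤ t → t ≤ (m : ℤ) → (x - 1) + t ≠ 0 := by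
      intro t ht1 ht2
      have := hx (t - 1) (by omega) (by omega)
      push_cast at this ⊢
      intro hcon; apply this; linarith
    rw [show n + 1 + 1 = n + 2 from rfl, Ssucc n x (fun y => G y m), ih x h1, ih (x - 1) h2]
    have hy1 : (x - (n + 1)) + 1 ≠ 0 := by
      have := hx (-(n : ℤ)) (by omega) (by omega)
      push_cast at this ⊢
      intro hcon; apply this; linarith
    have hy2 : (x - (n + 1)) + 1 + (n + m : ℕ) ≠ 0 := by
      have := hx (m : ℤ) (by omega) le_rfl
      push_cast at this ⊢
      intro hcon; apply this; push_cast; linarith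
    have hd := Gdiff (x - (n + 1)) (n + m) hy1 hy2
    have e1 : x - (n : ℝ) = (x - (n + 1)) + 1 := by ring
    have e2 : (x : ℝ) - 1 - n = x - (n + 1) := by push_cast; ring
    have e3 : G (x - ((n : ℝ) + 1)) (n + 1 + m) = G (x - ((n : ℝ) + 1)) (n + m + 1) := by
      rw [add_right_comm]
    have hfall : fall ((n : ℝ) + 1 + m - 1) (n + 1) = fall ((n : ℝ) + m - 1) n * ((n : ℝ) + m) := by
      rw [fall, Finset.prod_range_succ', fall]
      congr 1
      · apply Finset.prod_congr rfl; intro i _; push_cast; ring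
      · push_cast; ring
    rw [e2]
    push_cast
    rw [e3, hfall]
    rw [e1]
    push_cast at hd ⊢
    linear_combination ((-1 : ℝ) ^ n * fall ((n : ℝ) + (m : ℝ) - 1) n) * hd

theorem stmt12 (n m : ℕ) (hn : 0 < n) (hm : 0 < m) (x : ℝ)
    (hx : ∀ t : ℤ, 1 - (n : ℤ) ≤ t → t ≤ (m : ℤ) → x + t ≠ 0) :
    ∑ i ∈ Finset.range (n + 1), (-1 : ℝ) ^ i * (n.choose i) * i * gfall (x - i) (-(m : ℤ)) =
      (-1 : ℝ) ^ n * gfall (x - n) (-((n : ℤ) + m)) * fall ((n : ℝ) + m - 2) (n - 1) *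
        n * (x + m) := by
  obtain ⟨k, rfl⟩ : ∃ k, n = k + 1 := ⟨n - 1, by omega⟩
  have hgm : ∀ y : ℝ, gfall y (-(m : ℤ)) = G y m := fun y => gfall_neg y m
  have hgnm : gfall (x - ((k + 1 : ℕ) : ℝ)) (-(((k + 1 : ℕ) : ℤ) + m)) = G (x - ((k + 1 : ℕ) : ℝ)) (k + 1 + m) := by
    rw [show -(((k + 1 : ℕ) : ℤ) + m) = -((k + 1 + m : ℕ) : ℤ) by push_cast; ring, gfall_neg]
  -- hypothesis for aux at (x - 1, k)
  have h2 : ∀ t : ℤ, 1 - (k : ℤ) ≤ t → t ≤ (m : ℤ) → (x - 1) + t ≠ 0 := by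
    intro t ht1 ht2
    have := hx (t - 1) (by push_cast; omega) (by omega)
    push_cast at this ⊢
    intro hcon; apply this; linarith
  have hA := aux m k (x - 1) h2
  have key : ∀ i ∈ Finset.range (k + 1),
      (-1 : ℝ) ^ (i + 1) * (((k + 1).choose (i + 1) : ℕ) : ℝ) * (↑(i + 1) : ℝ) * gfall (x - (↑(i + 1) : ℝ)) (-(m : ℤ))
        = (-((k : ℝ) + 1)) * ((-1 : ℝ) ^ i * (k.choose i) * G ((x - 1) - i) m) := by
    intro i _
    have hc : ((k + 1 : ℕ) : ℝ) * (k.choose i : ℝ) = (((k + 1).choose (i + 1) : ℕ) : ℝ) * ((i + 1 : ℕ) : ℝ) := by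
      exact_mod_cast congrArg (fun t : ℕ => (t : ℝ)) (Nat.add_one_mul_choose_eq k i)
    have hxe : x - (↑(i + 1) : ℝ) = (x - 1) - i := by push_cast; ring
    rw [hxe, hgm]
    push_cast at hc ⊢
    linear_combination ((-1 : ℝ) ^ i * G ((x - 1) - (i : ℝ)) m) * hc
  rw [Finset.sum_range_succ' _ (k + 1), Finset.sum_congr rfl key, ← Finset.mul_sum, hA, hgnm]
  have hxm : x + (m : ℝ) ≠ 0 := by
    have := hx (m : ℤ) (by omega) le_rfl; push_cast at this; exact this
  have hG : G (x - 1 - (k : ℝ)) (k + m) = G (x - ((k + 1 : ℕ) : ℝ)) (k + 1 + m) * (x + m) := by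
    rw [show x - 1 - (k : ℝ) = x - ((k + 1 : ℕ) : ℝ) by push_cast; ring,
      show k + 1 + m = (k + m) + 1 by omega, Gsucc,
      show x - ((k + 1 : ℕ) : ℝ) + 1 + ((k + m : ℕ) : ℝ) = x + m by push_cast; ring]
    field_simp
  have hfa : fall ((((k + 1 : ℕ) : ℝ)) + (m : ℝ) - 2) (k + 1 - 1) = fall ((k : ℝ) + (m : ℝ) - 1) k := by
    congr 1
    push_cast; ring
  rw [hG, hfa]
  push_cast
  ring
end

section
/- Let s₁ < s₂ < s₃ be rational numbers with width w := 1/(s₂-s₁) + 1/(s₃-s₂) < 1, and suppose π(1) = 0, where π(n) counts the entries of the sequences l_k := ⌊k·s₂⌋ - ⌈k·s₁⌉ + 1 and r_k := ⌊k·s₃⌋ - ⌈k·s₂⌉ + 1 (k ≥ 1) that are at most n. Then there exists an integer n ≥ 2 with π(n) = n if and only if there exists a positive integer v such that r_v = l_{r_v - v}. -/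
namespace Stmt15Aux

/-- The finset of indices `k` with `1 ≤ k` and `f k ≤ n`. -/
def F (f : ℕ → ℤ) (n : ℕ) : Finset ℕ := (Finset.Icc 1 n).filter (fun k => f k ≤ (n : ℤ))

lemma hge (f : ℕ → ℤ) (hstep : ∀ k, f k + 1 ≤ f (k + 1)) (hf0 : f 0 = 1) :
    ∀ k : ℕ, (k : ℤ) + 1 ≤ f k := by
  intro k
  induction k with
  | zero => simp [hf0]
  | succ p ih => have := hstep p; push_cast; omega

lemma hsm (f : ℕ → ℤ) (hstep : ∀ k, f k + 1 ≤ f (k + 1)) : StrictMono f :=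
  strictMono_nat_of_lt_succ (fun n => by have := hstep n; omega)

lemma card_bridge (f : ℕ → ℤ) (hgek : ∀ k : ℕ, (k : ℤ) ≤ f k) (n : ℕ) :
    Nat.card {k : ℕ // 1 ≤ k ∧ f k ≤ (n : ℤ)} = (F f n).card := by
  have hset : {k : ℕ | 1 ≤ k ∧ f k ≤ (n : ℤ)} = ↑(F f n) := by
    ext k
    simp only [F, Finset.coe_filter, Finset.mem_Icc, Set.mem_setOf_eq]
    constructor
    · rintro ⟨h1, h2⟩
      have hk := hgek k
      exact ⟨⟨h1, by exact_mod_cast hk.trans h2⟩, h2⟩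
    · rintro ⟨⟨h1, _⟩, h2⟩
      exact ⟨h1, h2⟩
  calc Nat.card {k : ℕ // 1 ≤ k ∧ f k ≤ (n : ℤ)}
      = Set.ncard {k : ℕ | 1 ≤ k ∧ f k ≤ (n : ℤ)} := Nat.card_coe_set_eq _
    _ = (F f n).card := by rw [hset, Set.ncard_coe_finset]

lemma card_exact (f : ℕ → ℤ) (hstep : ∀ k, f k + 1 ≤ f (k + 1)) (hf0 : f 0 = 1)
    (u n : ℕ) (hu : 1 ≤ u) (hfu : f u = (n : ℤ)) : (F f n).card = u := by
  have hmono := hsm f hstep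
  have hge' := hge f hstep hf0
  have hun : u < n := by have := hge' u; omega
  have hEq : F f n = Finset.Icc 1 u := by
    ext k
    simp only [F, Finset.mem_filter, Finset.mem_Icc]
    constructor
    · rintro ⟨⟨h1, _⟩, h3⟩
      exact ⟨h1, hmono.le_iff_le.mp (by omega)⟩
    · rintro ⟨h1, h2⟩
      have : f k ≤ f u := hmono.le_iff_le.mpr h2
      exact ⟨⟨h1, by omega⟩, by omega⟩
  rw [hEq, Nat.card_Icc]
  omega

lemma card_step (f : ℕ → ℤ) (hstep : ∀ k, f k + 1 ≤ f (k + 1)) (hf0 : f 0 = 1) (n : ℕ) :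
    (F f (n + 1)).card ≤ (F f n).card + 1 ∧
    ((¬ ∃ u, 1 ≤ u ∧ f u = (n : ℤ) + 1) → (F f (n + 1)).card ≤ (F f n).card) := by
  classical
  have hmono := hsm f hstep
  have hge' := hge f hstep hf0
  set S : Finset ℕ := (Finset.Icc 1 (n + 1)).filter (fun k => f k = (n : ℤ) + 1) with hS
  have hsub : F f (n + 1) ⊆ F f n ∪ S := by
    intro k hk
    simp only [F, Finset.mem_filter, Finset.mem_Icc] at hk
    obtain ⟨⟨h1, h2⟩, h3⟩ := hk
    rcases lt_or_eq_of_le h3 with h4 | h4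
    · apply Finset.mem_union_left
      simp only [F, Finset.mem_filter, Finset.mem_Icc]
      have := hge' k
      push_cast at h4 this ⊢
      exact ⟨⟨h1, by omega⟩, by omega⟩
    · apply Finset.mem_union_right
      simp only [hS, Finset.mem_filter, Finset.mem_Icc]
      push_cast at h4 ⊢
      exact ⟨⟨h1, h2⟩, by omega⟩
  have hScard : S.card ≤ 1 := by
    apply Finset.card_le_one.mpr
    intro a ha b hb
    simp only [hS, Finset.mem_filter, Finset.mem_Icc] at ha hb
    exact hmono.injective (by omega)
  constructor
  · calc (F f (n + 1)).card ≤ (F f n ∪ S).card := Finset.card_le_card hsub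
      _ ≤ (F f n).card + S.card := Finset.card_union_le _ _
      _ ≤ (F f n).card + 1 := by omega
  · intro hne
    have hSe : S = ∅ := by
      rw [Finset.eq_empty_iff_forall_notMem]
      intro a ha
      simp only [hS, Finset.mem_filter, Finset.mem_Icc] at ha
      exact hne ⟨a, ha.1.1, ha.2⟩
    apply Finset.card_le_card
    intro k hk
    have := hsub hk
    rw [hSe, Finset.union_empty] at this
    exact this

end Stmt15Aux

open Stmt15Aux in
theorem stmt15 (s₁ s₂ s₃ : ℚ) (h12 : s₁ < s₂) (h23 : s₂ < s₃)
    (hw : 1 / (s₂ - s₁) + 1 / (s₃ - s₂) < 1)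
    (l r : ℕ → ℤ)
    (hl : ∀ k : ℕ, l k = ⌊(k : ℚ) * s₂⌋ - ⌈(k : ℚ) * s₁⌉ + 1)
    (hr : ∀ k : ℕ, r k = ⌊(k : ℚ) * s₃⌋ - ⌈(k : ℚ) * s₂⌉ + 1)
    (π : ℕ → ℕ)
    (hπ : ∀ n : ℕ, π n = Nat.card {k : ℕ // 1 ≤ k ∧ l k ≤ (n : ℤ)} +
        Nat.card {k : ℕ // 1 ≤ k ∧ r k ≤ (n : ℤ)})
    (hπ1 : π 1 = 0) :
    (∃ n : ℕ, 2 ≤ n ∧ π n = n) ↔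
      ∃ v : ℕ, 1 ≤ v ∧ r v = l ((r v - v).toNat) := by
  classical
  have hd1 : 0 < s₂ - s₁ := by linarith
  have hd2 : 0 < s₃ - s₂ := by linarith
  have hp1 : 0 < 1 / (s₂ - s₁) := by positivity
  have hp2 : 0 < 1 / (s₃ - s₂) := by positivity
  have h21 : 1 < s₂ - s₁ := by
    have h : 1 / (s₂ - s₁) < 1 := by linarith
    rwa [div_lt_one hd1] at h
  have h32 : 1 < s₃ - s₂ := by
    have h : 1 / (s₃ - s₂) < 1 := by linarith
    rwa [div_lt_one hd2] at h
  -- basic lower bound `k ≤ l k`, `k ≤ r k`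
  have hgen : ∀ (a b : ℚ), 1 < b - a → ∀ k : ℕ, (k : ℤ) ≤ ⌊(k : ℚ) * b⌋ - ⌈(k : ℚ) * a⌉ + 1 := by
    intro a b hab k
    have hk0 : (0 : ℚ) ≤ (k : ℚ) := Nat.cast_nonneg k
    have hkab : (k : ℚ) * a + (k : ℚ) ≤ (k : ℚ) * b := by nlinarith
    have hc : (⌈(k : ℚ) * a⌉ : ℚ) < (k : ℚ) * a + 1 := Int.ceil_lt_add_one _
    have h2 : ⌈(k : ℚ) * a⌉ + (k : ℤ) - 1 ≤ ⌊(k : ℚ) * b⌋ := by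
      rw [Int.le_floor]
      push_cast
      linarith
    omega
  have hgel : ∀ k : ℕ, (k : ℤ) ≤ l k := fun k => by rw [hl]; exact hgen s₁ s₂ h21 k
  have hger : ∀ k : ℕ, (k : ℤ) ≤ r k := fun k => by rw [hr]; exact hgen s₂ s₃ h32 k
  -- rewrite π with finset cards
  have hπF : ∀ n : ℕ, π n = (F l n).card + (F r n).card := by
    intro n
    rw [hπ, card_bridge l hgel, card_bridge r hger]
  -- π 1 = 0 gives l 1 ≥ 2, r 1 ≥ 2
  have h1mem : ∀ f : ℕ → ℤ, f 1 ≤ 1 → 1 ∈ F f 1 := by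
    intro f hf
    simp only [F, Finset.mem_filter, Finset.mem_Icc]
    exact ⟨⟨le_refl 1, le_refl 1⟩, by exact_mod_cast hf⟩
  have hcard1 : (F l 1).card + (F r 1).card = 0 := by rw [← hπF]; exact hπ1
  have hl1 : 2 ≤ l 1 := by
    by_contra h
    have hmem := h1mem l (by omega)
    have : (F l 1).card ≠ 0 := Finset.card_ne_zero_of_mem hmem
    omega
  have hr1 : 2 ≤ r 1 := by
    by_contra h
    have hmem := h1mem r (by omega)
    have : (F r 1).card ≠ 0 := Finset.card_ne_zero_of_mem hmem
    omega
  -- step inequalities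
  have hstepgen : ∀ (a b : ℚ) (f : ℕ → ℤ),
      (∀ k : ℕ, f k = ⌊(k : ℚ) * b⌋ - ⌈(k : ℚ) * a⌉ + 1) → 2 ≤ f 1 →
      ∀ k, f k + 1 ≤ f (k + 1) := by
    intro a b f hf hf1 k
    have hf1' : ⌈a⌉ + 1 ≤ ⌊b⌋ := by
      rw [hf 1] at hf1
      push_cast at hf1
      simp only [one_mul] at hf1
      omega
    have hfl : ⌊(k : ℚ) * b⌋ + ⌊b⌋ ≤ ⌊((k + 1 : ℕ) : ℚ) * b⌋ := by
      rw [Int.le_floor]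
      push_cast
      have h1 := Int.floor_le ((k : ℚ) * b)
      have h2 := Int.floor_le b
      nlinarith
    have hce : ⌈((k + 1 : ℕ) : ℚ) * a⌉ ≤ ⌈(k : ℚ) * a⌉ + ⌈a⌉ := by
      rw [Int.ceil_le]
      push_cast
      have h1 := Int.le_ceil ((k : ℚ) * a)
      have h2 := Int.le_ceil a
      nlinarith
    rw [hf k, hf (k + 1)]
    omega
  have hlstep : ∀ k, l k + 1 ≤ l (k + 1) := hstepgen s₁ s₂ l hl hl1
  have hrstep : ∀ k, r k + 1 ≤ r (k + 1) := hstepgen s₂ s₃ r hr hr1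
  have hl0 : l 0 = 1 := by rw [hl]; simp
  have hr0 : r 0 = 1 := by rw [hr]; simp
  have hgel' := hge l hlstep hl0
  have hger' := hge r hrstep hr0
  constructor
  · -- forward direction
    rintro ⟨n, hn2, hπn⟩
    have hex : ∃ m, 2 ≤ m ∧ π m = m := ⟨n, hn2, hπn⟩
    obtain ⟨hn₀2, hπn₀⟩ := Nat.find_spec hex
    set n₀ := Nat.find hex with hn₀
    have key : ∀ m, 1 ≤ m → m < n₀ → π m < m := by
      intro m
      induction m with
      | zero => omega
      | succ p ih =>
        intro _ hm
        by_cases hp : 1 ≤ p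
        · have hne : π (p + 1) ≠ p + 1 := by
            intro h
            exact Nat.find_min hex hm ⟨by omega, h⟩
          have hπp := ih hp (by omega)
          have hs1 := (card_step l hlstep hl0 p).1
          have hs2 := (card_step r hrstep hr0 p).1
          have e1 := hπF p
          have e2 := hπF (p + 1)
          omega
        · have hp0 : p = 0 := by omega
          subst hp0
          have h01 : π (0 + 1) = 0 := hπ1
          omega
    -- at n₀, π jumps by at least 2
    set p := n₀ - 1 with hpd
    have hpn : p + 1 = n₀ := by omega
    have hπp : π p < p := key p (by omega) (by omega)
    have hπn₀' : π (p + 1) = p + 1 := by rw [hpn]; exact hπn₀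
    have hs1 := (card_step l hlstep hl0 p).1
    have hs2 := (card_step r hrstep hr0 p).1
    have e1 := hπF p
    have e2 := hπF (p + 1)
    have hexl : ∃ u, 1 ≤ u ∧ l u = (p : ℤ) + 1 := by
      by_contra h
      have := (card_step l hlstep hl0 p).2 h
      omega
    have hexr : ∃ v, 1 ≤ v ∧ r v = (p : ℤ) + 1 := by
      by_contra h
      have := (card_step r hrstep hr0 p).2 h
      omega
    obtain ⟨u, hu1, hu⟩ := hexl
    obtain ⟨v, hv1, hv⟩ := hexr
    have hul : l u = ((p + 1 : ℕ) : ℤ) := by push_cast; omega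
    have hvr : r v = ((p + 1 : ℕ) : ℤ) := by push_cast; omega
    have hcl : (F l (p + 1)).card = u := card_exact l hlstep hl0 u (p + 1) hu1 hul
    have hcr : (F r (p + 1)).card = v := card_exact r hrstep hr0 v (p + 1) hv1 hvr
    have huv : u + v = p + 1 := by omega
    refine ⟨v, hv1, ?_⟩
    have htn : (r v - v).toNat = u := by omega
    rw [htn, hu]
    omega
  · -- backward direction
    rintro ⟨v, hv1, hrv⟩
    have hrvge : (v : ℤ) + 1 ≤ r v := hger' v
    set n : ℕ := (r v).toNat with hn
    have hnv : (n : ℤ) = r v := Int.toNat_of_nonneg (by omega)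
    have hu1 : 1 ≤ n - v := by omega
    have htn : (r v - v).toNat = n - v := by omega
    have hln : l (n - v) = (n : ℤ) := by rw [← htn, ← hrv]; omega
    have hcl : (F l n).card = n - v := card_exact l hlstep hl0 (n - v) n hu1 hln
    have hcr : (F r n).card = v := card_exact r hrstep hr0 v n hv1 (by omega)
    refine ⟨n, by omega, ?_⟩
    rw [hπF]
    omega
end

section
/- Let a, b, c be pairwise coprime positive integers and e, f, g positive integers with gcd(e,f,g) = 1 and a·e + b·f = c·g. Then there exists a unique integer r with 1 ≤ r ≤ g such that g divides e·r - b and g divides f·r + a. -/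
theorem stmt17 (a b c e f g : ℕ)
    (ha : 0 < a) (hb : 0 < b) (hc : 0 < c)
    (he : 0 < e) (hf : 0 < f) (hg : 0 < g)
    (hab : Nat.Coprime a b) (hac : Nat.Coprime a c) (hbc : Nat.Coprime b c)
    (hefg : Nat.gcd e (Nat.gcd f g) = 1)
    (hrel : a * e + b * f = c * g) :
    ∃! r : ℕ, 1 ≤ r ∧ r ≤ g ∧
      (g : ℤ) ∣ ((e : ℤ) * r - b) ∧ (g : ℤ) ∣ ((f : ℤ) * r + a) := by
  have hcast : (a:ℤ)*e + b*f = c*g := by exact_mod_cast hrel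
  obtain ⟨u, v, w, huvw⟩ : ∃ u v w : ℤ, (e:ℤ)*u + f*v + g*w = 1 := by
    refine ⟨Nat.gcdA e (Nat.gcd f g), (Nat.gcdB e (Nat.gcd f g)) * Nat.gcdA f g,
      (Nat.gcdB e (Nat.gcd f g)) * Nat.gcdB f g, ?_⟩
    have h1 := Nat.gcd_eq_gcd_ab e (Nat.gcd f g)
    have h2 := Nat.gcd_eq_gcd_ab f g
    rw [hefg] at h1
    push_cast at h1
    rw [h2] at h1
    push_cast at h1
    linarith
  set x : ℤ := u*b - v*a with hx
  have hdiv1 : (g:ℤ) ∣ ((e:ℤ)*x - b) := ⟨-v*c - w*b, by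
    linear_combination (-(v:ℤ)) * hcast + (b:ℤ) * huvw⟩
  have hdiv2 : (g:ℤ) ∣ ((f:ℤ)*x + a) := ⟨u*c + w*a, by
    linear_combination (u:ℤ) * hcast - (a:ℤ) * huvw⟩
  have hgz : (0:ℤ) < g := by exact_mod_cast hg
  set r0 : ℤ := x % g with hr0
  have hr0nn : 0 ≤ r0 := Int.emod_nonneg x (ne_of_gt hgz)
  have hr0lt : r0 < g := Int.emod_lt_of_pos x hgz
  have hxr0 : (g:ℤ) ∣ (x - r0) := ⟨x / g, by rw [hr0, Int.emod_def]; ring⟩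
  set r : ℕ := if r0 = 0 then g else r0.toNat with hrdef
  have hrcast : (g:ℤ) ∣ (x - r) := by
    by_cases h : r0 = 0
    · simp only [hrdef, if_pos h]
      have hgx : (g:ℤ) ∣ x := by
        have := hxr0; rw [h, sub_zero] at this; exact this
      exact dvd_sub hgx dvd_rfl
    · simp only [hrdef, if_neg h]
      rwa [Int.toNat_of_nonneg hr0nn]
  have hrb : 1 ≤ r ∧ r ≤ g := by
    by_cases h : r0 = 0
    · simp only [hrdef, if_pos h]; omega
    · simp only [hrdef, if_neg h]; omega
  refine ⟨r, ⟨hrb.1, hrb.2, ?_, ?_⟩, ?_⟩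
  · have : (e:ℤ)*r - b = (e*x - b) - e*(x - r) := by ring
    rw [this]
    exact dvd_sub hdiv1 (Dvd.dvd.mul_left hrcast _)
  · have : (f:ℤ)*r + a = (f*x + a) - f*(x - r) := by ring
    rw [this]
    exact dvd_sub hdiv2 (Dvd.dvd.mul_left hrcast _)
  · rintro y ⟨hy1, hy2, hyd1, hyd2⟩
    set t : ℤ := (y:ℤ) - r with ht
    have hte : (g:ℤ) ∣ (e:ℤ)*t := by
      have h1 : (e:ℤ)*r - b = (e*x - b) - e*(x - r) := by ring
      have hrd : (g:ℤ) ∣ ((e:ℤ)*r - b) := by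
        rw [h1]; exact dvd_sub hdiv1 (Dvd.dvd.mul_left hrcast _)
      have : (e:ℤ)*t = ((e:ℤ)*y - b) - ((e:ℤ)*r - b) := by rw [ht]; ring
      rw [this]; exact dvd_sub hyd1 hrd
    have htf : (g:ℤ) ∣ (f:ℤ)*t := by
      have h1 : (f:ℤ)*r + a = (f*x + a) - f*(x - r) := by ring
      have hrd : (g:ℤ) ∣ ((f:ℤ)*r + a) := by
        rw [h1]; exact dvd_sub hdiv2 (Dvd.dvd.mul_left hrcast _)
      have : (f:ℤ)*t = ((f:ℤ)*y + a) - ((f:ℤ)*r + a) := by rw [ht]; ring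
      rw [this]; exact dvd_sub hyd2 hrd
    have htg : (g:ℤ) ∣ t := by
      have : t = u*((e:ℤ)*t) + v*((f:ℤ)*t) + (g:ℤ)*(w*t) := by
        linear_combination (-t) * huvw
      rw [this]
      exact dvd_add (dvd_add (Dvd.dvd.mul_left hte u) (Dvd.dvd.mul_left htf v))
        (Dvd.dvd.mul_right dvd_rfl _)
    have habs : |t| < g := by
      have hyg : (y:ℤ) ≤ g := by exact_mod_cast hy2
      have hy1' : (1:ℤ) ≤ y := by exact_mod_cast hy1
      have hrg : (r:ℤ) ≤ g := by exact_mod_cast hrb.2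
      have hr1' : (1:ℤ) ≤ r := by exact_mod_cast hrb.1
      rw [abs_lt]; constructor <;> [linarith; linarith]
    have : t = 0 := Int.eq_zero_of_abs_lt_dvd htg habs
    have : (y:ℤ) = r := by linarith [this, ht ▸ this]
    exact_mod_cast this
end

section
/- Let n ≥ 1 and define the (n+1)-component vector ξ with entries ξ_i = (-1)^i · C(n,i) · (A+1-n+i)_i · (B-2-i)_{n-i} for 0 ≤ i ≤ n, and the n×(n+1) matrix M₁ with entries (M₁)_{j,i} = (A+1)_{n-i} · (B-2-j)_i for 0 ≤ j ≤ n-1, 0 ≤ i ≤ n, where (x)_k denotes the falling factorial and A, B are real numbers. Then M₁·ξ = 0. -/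
open Finset fwdDiff


lemma fall_add (x : ℝ) (a b : ℕ) : fall x (a + b) = fall x a * fall (x - a) b := by
  unfold fall
  rw [Finset.prod_range_add]
  congr 1
  apply Finset.prod_congr rfl
  intro k _
  push_cast
  ring

lemma fall_succ (x : ℝ) (j : ℕ) : fall x (j + 1) = fall x j * (x - j) :=
  Finset.prod_range_succ _ _

lemma fall_succ' (x : ℝ) (j : ℕ) : fall x (j + 1) = x * fall (x - 1) j := by
  unfold fall
  rw [Finset.prod_range_succ']
  simp only [Nat.cast_zero, sub_zero]
  rw [mul_comm]
  congr 1
  apply Finset.prod_congr rfl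
  intro k _
  push_cast
  ring

lemma iter_zero (m : ℕ) : (fwdDiff (1 : ℕ))^[m] (0 : ℕ → ℝ) = 0 := by
  induction m with
  | zero => rfl
  | succ m IH =>
      rw [Function.iterate_succ_apply,
        show fwdDiff (1 : ℕ) (0 : ℕ → ℝ) = 0 from funext fun _ => sub_self _, IH]

lemma vanish : ∀ j n : ℕ, j < n → ∀ c : ℝ,
    (fwdDiff (1 : ℕ))^[n] (fun i : ℕ ↦ fall (c - i) j) = 0 := by
  intro j
  induction j with
  | zero =>
      intro n hn c
      obtain ⟨m, rfl⟩ := Nat.exists_eq_succ_of_ne_zero (by omega : n ≠ 0)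
      rw [Function.iterate_succ_apply,
        show fwdDiff (1 : ℕ) (fun i : ℕ ↦ fall (c - i) 0) = 0 by
          funext x; simp [fwdDiff, fall], iter_zero]
  | succ j IH =>
      intro n hn c
      obtain ⟨m, rfl⟩ := Nat.exists_eq_succ_of_ne_zero (by omega : n ≠ 0)
      rw [Function.iterate_succ_apply]
      have step : fwdDiff (1 : ℕ) (fun i : ℕ ↦ fall (c - i) (j + 1))
          = (-(j + 1) : ℝ) • (fun i : ℕ ↦ fall (c - 1 - i) j) := by
        funext x
        simp only [fwdDiff, Pi.smul_apply, smul_eq_mul]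
        have e : c - ((x + 1 : ℕ) : ℝ) = c - 1 - x := by push_cast; ring
        rw [e, fall_succ (c - 1 - x) j, fall_succ' (c - x) j,
          show c - (x : ℝ) - 1 = c - 1 - x by ring]
        ring
      rw [step, fwdDiff_iter_const_smul, IH m (by omega) (c - 1)]
      simp

lemma alt_sum (c : ℝ) (n j : ℕ) (hj : j < n) :
    ∑ i ∈ Finset.range (n + 1), (-1 : ℝ) ^ i * (n.choose i) * fall (c - i) j = 0 := by
  have h1 := fwdDiff_iter_eq_sum_shift (1 : ℕ) (fun i : ℕ ↦ fall (c - i) j) n 0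
  rw [vanish j n hj c] at h1
  simp only [Pi.zero_apply, smul_eq_mul, mul_one, zero_add, zsmul_eq_mul, Int.cast_mul,
    Int.cast_pow, Int.cast_neg, Int.cast_one, Int.cast_natCast] at h1
  have key : ∀ i ∈ Finset.range (n + 1),
      (-1 : ℝ) ^ i * (n.choose i) * fall (c - i) j
        = (-1 : ℝ) ^ n * ((-1 : ℝ) ^ (n - i) * (n.choose i) * fall (c - i) j) := by
    intro i hi
    have hi' : i ≤ n := Nat.lt_succ_iff.mp (Finset.mem_range.mp hi)
    have h2 : (-1 : ℝ) ^ (n - i) * (-1) ^ i = (-1) ^ n := by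
      rw [← pow_add, Nat.sub_add_cancel hi']
    have h3 : (-1 : ℝ) ^ i * (-1) ^ i = 1 := by
      rw [← pow_add]
      exact Even.neg_one_pow ⟨i, rfl⟩
    have hN : (-1 : ℝ) ^ n * (-1) ^ n = 1 := by
      rw [← pow_add]; exact Even.neg_one_pow ⟨n, rfl⟩
    have hy : (-1 : ℝ) ^ (n - i) = (-1) ^ n * (-1) ^ i := by
      linear_combination ((-1 : ℝ) ^ i) * h2 - ((-1 : ℝ) ^ (n - i)) * h3
    rw [hy]
    linear_combination (-((-1 : ℝ) ^ i * (n.choose i) * fall (c - i) j)) * hN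
  rw [Finset.sum_congr rfl key, ← Finset.mul_sum]
  have : ∑ i ∈ Finset.range (n + 1), (-1 : ℝ) ^ (n - i) * (n.choose i) * fall (c - i) j = 0 := by
    rw [← h1]
  rw [this, mul_zero]

lemma lemA (x : ℝ) (i n : ℕ) (hi : i ≤ n) :
    fall x (n - i) * fall (x - n + i) i = fall x n := by
  have h := fall_add x (n - i) i
  rw [Nat.sub_add_cancel hi] at h
  have hc : x - ((n - i : ℕ) : ℝ) = x - n + i := by
    rw [Nat.cast_sub hi]; ring
  rw [h, hc]

lemma lemB (c : ℝ) (i j n : ℕ) (hi : i ≤ n) (hj : j ≤ n) :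
    fall (c - j) i * fall (c - i) (n - i) = fall (c - j) (n - j) * fall (c - i) j := by
  rcases le_total i j with hij | hij
  · have e1 : fall (c - i) (n - i) = fall (c - i) (j - i) * fall (c - j) (n - j) := by
      have h := fall_add (c - i) (j - i) (n - j)
      rw [show (j - i) + (n - j) = n - i by omega] at h
      rw [h, show c - (i : ℝ) - ((j - i : ℕ) : ℝ) = c - j by rw [Nat.cast_sub hij]; ring]
    have e2 : fall (c - i) j = fall (c - i) (j - i) * fall (c - j) i := by
      have h := fall_add (c - i) (j - i) i
      rw [show (j - i) + i = j by omega] at h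
      rw [h, show c - (i : ℝ) - ((j - i : ℕ) : ℝ) = c - j by rw [Nat.cast_sub hij]; ring]
    rw [e1, e2]; ring
  · have e1 : fall (c - j) i = fall (c - j) (i - j) * fall (c - i) j := by
      have h := fall_add (c - j) (i - j) j
      rw [show (i - j) + j = i by omega] at h
      rw [h, show c - (j : ℝ) - ((i - j : ℕ) : ℝ) = c - i by rw [Nat.cast_sub hij]; ring]
    have e2 : fall (c - j) (n - j) = fall (c - j) (i - j) * fall (c - i) (n - i) := by
      have h := fall_add (c - j) (i - j) (n - i)
      rw [show (i - j) + (n - i) = n - j by omega] at h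
      rw [h, show c - (j : ℝ) - ((i - j : ℕ) : ℝ) = c - i by rw [Nat.cast_sub hij]; ring]
    rw [e1, e2]; ring

theorem stmt19 (n : ℕ) (hn : 1 ≤ n) (A B : ℝ) :
    (Matrix.of fun (j : Fin n) (i : Fin (n + 1)) =>
        fall (A + 1) (n - (i : ℕ)) * fall (B - 2 - (j : ℕ)) (i : ℕ)).mulVec
      (fun i : Fin (n + 1) =>
        (-1 : ℝ) ^ (i : ℕ) * (n.choose i) * fall (A + 1 - n + (i : ℕ)) (i : ℕ) *
          fall (B - 2 - (i : ℕ)) (n - (i : ℕ))) = 0 := by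
  funext jf
  simp only [Matrix.mulVec, dotProduct, Matrix.of_apply, Pi.zero_apply]
  have hjn : (jf : ℕ) < n := jf.2
  have hterm : ∀ i : Fin (n + 1),
      fall (A + 1) (n - (i : ℕ)) * fall (B - 2 - (jf : ℕ)) (i : ℕ) *
        ((-1 : ℝ) ^ (i : ℕ) * (n.choose i) * fall (A + 1 - n + (i : ℕ)) (i : ℕ) *
          fall (B - 2 - (i : ℕ)) (n - (i : ℕ)))
      = (fall (A + 1) n * fall (B - 2 - (jf : ℕ)) (n - (jf : ℕ))) *
          ((-1 : ℝ) ^ (i : ℕ) * (n.choose i) * fall (B - 2 - (i : ℕ)) (jf : ℕ)) := by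
    intro i
    have hi : (i : ℕ) ≤ n := Nat.lt_succ_iff.mp i.2
    have hA := lemA (A + 1) (i : ℕ) n hi
    have hB := lemB (B - 2) (i : ℕ) (jf : ℕ) n hi (le_of_lt hjn)
    calc fall (A + 1) (n - (i : ℕ)) * fall (B - 2 - (jf : ℕ)) (i : ℕ) *
        ((-1 : ℝ) ^ (i : ℕ) * (n.choose i) * fall (A + 1 - n + (i : ℕ)) (i : ℕ) *
          fall (B - 2 - (i : ℕ)) (n - (i : ℕ)))
        = (-1 : ℝ) ^ (i : ℕ) * (n.choose i) *
            (fall (A + 1) (n - (i : ℕ)) * fall (A + 1 - n + (i : ℕ)) (i : ℕ)) *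
            (fall (B - 2 - (jf : ℕ)) (i : ℕ) * fall (B - 2 - (i : ℕ)) (n - (i : ℕ))) := by
          ring
      _ = (-1 : ℝ) ^ (i : ℕ) * (n.choose i) * fall (A + 1) n *
            (fall (B - 2 - (jf : ℕ)) (n - (jf : ℕ)) * fall (B - 2 - (i : ℕ)) (jf : ℕ)) := by
          rw [hA, hB]
      _ = _ := by ring
  rw [Finset.sum_congr rfl fun i _ => hterm i, ← Finset.mul_sum]
  rw [Fin.sum_univ_eq_sum_range
    (fun i => (-1 : ℝ) ^ i * (n.choose i) * fall (B - 2 - (i : ℕ)) (jf : ℕ))]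
  rw [alt_sum (B - 2) n (jf : ℕ) hjn, mul_zero]
end
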